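/- Let a, b, τ, η be real numbers with τ > 0 and 2τ − b²η² > 0. Set V(x) = (1 − τx²)² + η²(bx + ax²)², and define x⁺ = (−abη² + √(τ²(2τ − b²η²) + 2a²η²τ))/(τ² + a²η²) and x⁻ = (−abη² − √(τ²(2τ − b²η²) + 2a²η²τ))/(τ² + a²η²). Then x⁻ < 0 < x⁺, V(x⁺) = V(x⁻) = 1, V(x) < 1 for all x ∈ (0, x⁺), and V(x) < 1 for all x ∈ (x⁻, 0). -/

import Mathlib

/-- The hill intervals of the potential `V(x) = (1 − τx²)² + η²(bx + ax²)²`: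
`x⁻ < 0 < x⁺`, `V(x⁺) = V(x⁻) = 1`, and `V < 1` on `(0,x⁺)` and on `(x⁻,0)`. -/
theorem stmt_2 (a b τ η : ℝ) (hτ : 0 < τ) (hC : 0 < 2*τ - b^2*η^2)
    (V : ℝ → ℝ) (hV : ∀ x, V x = (1 - τ*x^2)^2 + η^2*(b*x + a*x^2)^2)
    (xp xm : ℝ)
    (hxp : xp = (-(a*b*η^2) + Real.sqrt (τ^2*(2*τ - b^2*η^2) + 2*a^2*η^2*τ))
        / (τ^2 + a^2*η^2))
    (hxm : xm = (-(a*b*η^2) - Real.sqrt (τ^2*(2*τ - b^2*η^2) + 2*a^2*η^2*τ))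
        / (τ^2 + a^2*η^2)) :
    xm < 0 ∧ 0 < xp ∧ V xp = 1 ∧ V xm = 1 ∧
      (∀ x ∈ Set.Ioo 0 xp, V x < 1) ∧ (∀ x ∈ Set.Ioo xm 0, V x < 1) := by
  have hA : (0:ℝ) < τ^2 + a^2*η^2 := by nlinarith [sq_nonneg (a*η), sq_nonneg τ]
  have hD0 : (0:ℝ) < τ^2*(2*τ - b^2*η^2) + 2*a^2*η^2*τ := by
    nlinarith [mul_pos (pow_pos hτ 2) hC, mul_nonneg (sq_nonneg (a*η)) hτ.le]
  set s := Real.sqrt (τ^2*(2*τ - b^2*η^2) + 2*a^2*η^2*τ) with hs_def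
  have hs2 : s^2 = τ^2*(2*τ - b^2*η^2) + 2*a^2*η^2*τ := Real.sq_sqrt hD0.le
  have hs_pos : 0 < s := Real.sqrt_pos.mpr hD0
  have hs_gt : |a*b*η^2| < s := by
    have h1 : (a*b*η^2)^2 < s^2 := by
      rw [hs2]; nlinarith [mul_pos hA hC]
    nlinarith [abs_nonneg (a*b*η^2), sq_abs (a*b*η^2)]
  have habs1 : -(a*b*η^2) + s > 0 := by
    have h1 := le_abs_self (a*b*η^2); have h2 := neg_abs_le (a*b*η^2); linarith
  have habs2 : -(a*b*η^2) - s < 0 := by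
    have h1 := le_abs_self (a*b*η^2); have h2 := neg_abs_le (a*b*η^2); linarith
  have hxp_pos : 0 < xp := by rw [hxp]; exact div_pos habs1 hA
  have hxm_neg : xm < 0 := by rw [hxm]; exact div_neg_of_neg_of_pos habs2 hA
  have hsum : (τ^2 + a^2*η^2) * (xp + xm) = -(2*(a*b*η^2)) := by
    rw [hxp, hxm]; field_simp; ring
  have hprod : (τ^2 + a^2*η^2) * (xp * xm) = -(2*τ - b^2*η^2) := by
    rw [hxp, hxm]; field_simp; linear_combination (-1) * hs2
  have hq : ∀ x : ℝ, (τ^2 + a^2*η^2) * ((xp - x)*(x - xm))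
      = -((τ^2 + a^2*η^2)*x^2) - 2*(a*b*η^2)*x + (2*τ - b^2*η^2) := by
    intro x; linear_combination x * hsum - hprod
  have key : ∀ x : ℝ, V x = 1 - x^2 * ((τ^2 + a^2*η^2) * ((xp - x)*(x - xm))) := by
    intro x; rw [hV, hq x]; ring
  refine ⟨hxm_neg, hxp_pos, ?_, ?_, ?_, ?_⟩
  · rw [key xp]; ring
  · rw [key xm]; ring
  · rintro x ⟨hx0, hxxp⟩
    rw [key x]
    have : 0 < x^2 * ((τ^2 + a^2*η^2) * ((xp - x)*(x - xm))) := by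
      apply mul_pos (pow_pos hx0 2)
      exact mul_pos hA (mul_pos (by linarith) (by linarith))
    linarith
  · rintro x ⟨hxxm, hx0⟩
    rw [key x]
    have hx2 : 0 < x^2 := by nlinarith
    have : 0 < x^2 * ((τ^2 + a^2*η^2) * ((xp - x)*(x - xm))) := by
      apply mul_pos hx2
      exact mul_pos hA (mul_pos (by linarith) (by linarith))
    linarith
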